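/- Let A be a real n×n matrix and B a real m×m matrix such that -A² and -B² are both symmetric positive definite, and let T be a real m×n matrix with T·A = B·T. Then T·j(A) = j(B)·T, where j(A) = A·(-A²)^{-1/2} and j(B) = B·(-B²)^{-1/2} with (-A²)^{1/2}, (-B²)^{1/2} the unique symmetric positive definite square roots. -/

import Mathlib

open scoped ComplexOrder in
noncomputable def Matrix.PosSemidef.sqrt {n : Type*} [Fintype n] [DecidableEq n] {𝕜 : Type*}
    [RCLike 𝕜] {A : Matrix n n 𝕜} (hA : A.PosSemidef) : Matrix n n 𝕜 :=
  hA.1.eigenvectorUnitary.1 * Matrix.diagonal ((↑) ∘ (√·) ∘ hA.1.eigenvalues) *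
    (star hA.1.eigenvectorUnitary : Matrix n n 𝕜)

open Matrix

lemma Matrix.PosSemidef.posSemidef_sqrt {n : Type*} [Fintype n] [DecidableEq n]
    {A : Matrix n n ℝ} (hA : A.PosSemidef) : hA.sqrt.PosSemidef := by
  unfold Matrix.PosSemidef.sqrt
  have hd : (Matrix.diagonal ((↑) ∘ (√·) ∘ hA.1.eigenvalues) : Matrix n n ℝ).PosSemidef :=
    Matrix.PosSemidef.diagonal (fun i => by simp [Real.sqrt_nonneg])
  convert hd.mul_mul_conjTranspose_same (hA.1.eigenvectorUnitary.1) using 1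
  rfl

lemma Matrix.PosSemidef.sqrt_mul_self {n : Type*} [Fintype n] [DecidableEq n]
    {A : Matrix n n ℝ} (hA : A.PosSemidef) : hA.sqrt * hA.sqrt = A := by
  unfold Matrix.PosSemidef.sqrt
  conv_rhs => rw [hA.1.spectral_theorem]
  have hU : (star hA.1.eigenvectorUnitary : Matrix n n ℝ) * hA.1.eigenvectorUnitary.1 = 1 :=
    Matrix.UnitaryGroup.star_mul_self _
  rw [Unitary.conjStarAlgAut_apply]
  simp only [Matrix.mul_assoc]
  rw [← Matrix.mul_assoc (star _ : Matrix n n ℝ) _ _, hU, Matrix.one_mul,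
    ← Matrix.mul_assoc (diagonal _), Matrix.diagonal_mul_diagonal]
  congr 3
  funext i
  simp [← sq, Real.sq_sqrt (hA.eigenvalues_nonneg i)]


/-- The trace of `Mᵀ * M` is nonnegative. -/
lemma trace_transpose_mul_self_nonneg' {m n : ℕ} (M : Matrix (Fin m) (Fin n) ℝ) :
    0 ≤ (Mᵀ * M).trace := by
  rw [Matrix.trace]
  refine Finset.sum_nonneg fun j _ => ?_
  simp only [Matrix.diag, Matrix.mul_apply, Matrix.transpose_apply]
  exact Finset.sum_nonneg fun i _ => mul_self_nonneg _

/-- If the trace of `Mᵀ * M` vanishes, then `M = 0`. -/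
lemma eq_zero_of_trace_transpose_mul_self' {m n : ℕ} (M : Matrix (Fin m) (Fin n) ℝ)
    (h : (Mᵀ * M).trace = 0) : M = 0 := by
  have h' : ∑ j, ∑ i, M i j * M i j = 0 := by
    rw [← h]
    simp [Matrix.trace, Matrix.diag, Matrix.mul_apply, Matrix.transpose_apply]
  ext i j
  have h1 := (Finset.sum_eq_zero_iff_of_nonneg
    (fun j _ => Finset.sum_nonneg fun i _ => mul_self_nonneg (M i j))).mp h' j
    (Finset.mem_univ j)
  have h2 := (Finset.sum_eq_zero_iff_of_nonneg
    (fun i _ => mul_self_nonneg (M i j))).mp h1 i (Finset.mem_univ i)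
  simpa using mul_self_eq_zero.mp h2

/-- Naturality of the retraction j(A) = A·(-A²)^{-1/2}: if T intertwines A
and B (T·A = B·T), then T intertwines j(A) and j(B). -/
theorem retraction_natural
    (n m : ℕ) (A : Matrix (Fin n) (Fin n) ℝ) (B : Matrix (Fin m) (Fin m) ℝ)
    (hA : (-(A * A)).PosDef) (hB : (-(B * B)).PosDef)
    (T : Matrix (Fin m) (Fin n) ℝ) (hT : T * A = B * T) :
    T * (A * (hA.posSemidef.sqrt)⁻¹) = (B * (hB.posSemidef.sqrt)⁻¹) * T := by
  classical
  set S := hA.posSemidef.sqrt with hSdef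
  set R := hB.posSemidef.sqrt with hRdef
  have hS : S.PosSemidef := hA.posSemidef.posSemidef_sqrt
  have hR : R.PosSemidef := hB.posSemidef.posSemidef_sqrt
  have hSS : S * S = -(A * A) := hA.posSemidef.sqrt_mul_self
  have hRR : R * R = -(B * B) := hB.posSemidef.sqrt_mul_self
  -- determinants are nonzero
  have hdetS : S.det ≠ 0 := by
    intro h0
    have : (S * S).det = 0 := by rw [Matrix.det_mul, h0, mul_zero]
    rw [hSS] at this
    exact ne_of_gt hA.det_pos this
  have hdetR : R.det ≠ 0 := by
    intro h0
    have : (R * R).det = 0 := by rw [Matrix.det_mul, h0, mul_zero]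
    rw [hRR] at this
    exact ne_of_gt hB.det_pos this
  -- T intertwines the squares
  have hsq : T * (S * S) = (R * R) * T := by
    rw [hSS, hRR, Matrix.mul_neg, Matrix.neg_mul, ← Matrix.mul_assoc,
      hT, Matrix.mul_assoc, hT, Matrix.mul_assoc]
  set D := T * S - R * T with hD
  have key : R * D + D * S = 0 := by
    simp only [hD, Matrix.mul_sub, Matrix.sub_mul, ← Matrix.mul_assoc] at hsq ⊢
    rw [hsq]
    abel
  have keyRD : R * D = -(D * S) := by
    rw [← add_eq_zero_iff_eq_neg.mp key]
  -- square roots of S and R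
  set P := hS.sqrt with hPdef
  set Q := hR.sqrt with hQdef
  have hPP : P * P = S := hS.sqrt_mul_self
  have hQQ : Q * Q = R := hR.sqrt_mul_self
  have hPt : Pᵀ = P := by
    have := hS.posSemidef_sqrt.1
    exact (Matrix.conjTranspose_eq_transpose_of_trivial P).symm.trans this
  have hQt : Qᵀ = Q := by
    have := hR.posSemidef_sqrt.1
    exact (Matrix.conjTranspose_eq_transpose_of_trivial Q).symm.trans this
  -- trace identities
  have t1 : ((Q * D)ᵀ * (Q * D)).trace = (Dᵀ * (R * D)).trace := by
    rw [Matrix.transpose_mul, hQt, Matrix.mul_assoc, ← Matrix.mul_assoc Q Q D, hQQ]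
  have t2 : ((D * P)ᵀ * (D * P)).trace = (Dᵀ * (D * S)).trace := by
    rw [Matrix.transpose_mul, hPt]
    rw [show P * Dᵀ * (D * P) = P * (Dᵀ * (D * P)) from Matrix.mul_assoc _ _ _]
    rw [Matrix.trace_mul_comm P (Dᵀ * (D * P))]
    rw [Matrix.mul_assoc, Matrix.mul_assoc, hPP]
  have tsum : ((Q * D)ᵀ * (Q * D)).trace + ((D * P)ᵀ * (D * P)).trace = 0 := by
    rw [t1, t2, keyRD]
    simp [Matrix.mul_neg]
  have hQD0 : ((Q * D)ᵀ * (Q * D)).trace = 0 := by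
    have h1 := trace_transpose_mul_self_nonneg' (Q * D)
    have h2 := trace_transpose_mul_self_nonneg' (D * P)
    linarith
  have hDP0 : ((D * P)ᵀ * (D * P)).trace = 0 := by
    have h1 := trace_transpose_mul_self_nonneg' (Q * D)
    linarith
  have hDP : D * P = 0 := eq_zero_of_trace_transpose_mul_self' _ hDP0
  have hDS : D * S = 0 := by
    rw [← hPP, ← Matrix.mul_assoc, hDP, Matrix.zero_mul]
  have hD0 : D = 0 := by
    have := congrArg (fun M => M * S⁻¹) hDS
    simpa [Matrix.mul_assoc, Matrix.mul_nonsing_inv S (isUnit_iff_ne_zero.mpr hdetS)] using this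
  have hTS : T * S = R * T := by
    have := sub_eq_zero.mp hD0
    exact this
  -- conclude
  have hTSinv : T * S⁻¹ = R⁻¹ * T := by
    have h : R⁻¹ * (T * S) * S⁻¹ = R⁻¹ * (R * T) * S⁻¹ := by rw [hTS]
    simp only [Matrix.mul_assoc] at h
    rw [Matrix.mul_nonsing_inv S (isUnit_iff_ne_zero.mpr hdetS), Matrix.mul_one] at h
    rw [← Matrix.mul_assoc, Matrix.nonsing_inv_mul R (isUnit_iff_ne_zero.mpr hdetR),
      Matrix.one_mul] at h
    exact h.symm
  calc T * (A * S⁻¹) = (T * A) * S⁻¹ := by rw [Matrix.mul_assoc]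
    _ = B * (T * S⁻¹) := by rw [hT, Matrix.mul_assoc]
    _ = B * (R⁻¹ * T) := by rw [hTSinv]
    _ = (B * R⁻¹) * T := by rw [Matrix.mul_assoc]
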